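/- Let A --x--> B --y--> C --δ--> A⟦1⟧ and A --(x,α)^T--> B ⊕ X₀ --(m,γ)--> D --η--> A⟦1⟧ be distinguished triangles, where X₀ lies in X, x is X-monic and α: A → X₀ is a left X-approximation of A. Let (id_A, p, v) be a morphism of distinguished triangles from the second triangle to the first, where p = (1,0): B ⊕ X₀ → B is the projection. Then v: D → C becomes an isomorphism in the quotient category C/X. -/

import Mathlib

/-!
Common definitions: the ideal of morphisms factoring through a subcategory `X`
(given as a set of objects of `C`), `X`-monic and `X`-epic morphisms, left and
right `X`-approximations, additive subcategories closed under isomorphisms,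
direct sums and direct summands, and the additive quotient category `C/X`
(realized via `CategoryTheory.Quotient` of the relation `xRel X`).
-/

open CategoryTheory Category Limits Pretriangulated

universe v u

namespace PaperStmt

variable {C : Type u} [Category.{v} C]

/-- `f` factors through an object of `X`. -/
def FactorsThru (X : Set C) {A B : C} (f : A ⟶ B) : Prop :=
  ∃ (M : C) (g : A ⟶ M) (h : M ⟶ B), M ∈ X ∧ g ≫ h = f

/-- `f : A ⟶ B` is `X`-monic: the map `Hom(B, X') → Hom(A, X')`, `g ↦ g ∘ f`,
is surjective for every object `X'` of `X`. -/
def IsXMonic (X : Set C) {A B : C} (f : A ⟶ B) : Prop :=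
  ∀ ⦃X' : C⦄, X' ∈ X → ∀ g : A ⟶ X', ∃ h : B ⟶ X', f ≫ h = g

/-- `f : A ⟶ B` is `X`-epic: the map `Hom(X', A) → Hom(X', B)`, `g ↦ f ∘ g`,
is surjective for every object `X'` of `X`. -/
def IsXEpic (X : Set C) {A B : C} (f : A ⟶ B) : Prop :=
  ∀ ⦃X' : C⦄, X' ∈ X → ∀ g : X' ⟶ B, ∃ h : X' ⟶ A, h ≫ f = g

/-- `α : A ⟶ X₀` is a left `X`-approximation of `A`: `X₀` lies in `X` and every
morphism from `A` to an object of `X` factors through `α`. -/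
def IsLeftApprox (X : Set C) {A X₀ : C} (α : A ⟶ X₀) : Prop :=
  X₀ ∈ X ∧ IsXMonic X α

/-- `β : X₀ ⟶ B` is a right `X`-approximation of `B`: `X₀` lies in `X` and every
morphism from an object of `X` to `B` factors through `β`. -/
def IsRightApprox (X : Set C) {X₀ B : C} (β : X₀ ⟶ B) : Prop :=
  X₀ ∈ X ∧ IsXEpic X β

/-- `X` is (the object class of) a full additive subcategory of `C`, closed
under isomorphisms, finite direct sums and direct summands. -/
structure IsAdditiveClosedSubcat [Preadditive C] [HasBinaryBiproducts C] (X : Set C) :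
    Prop where
  zero_mem : ∀ Z : C, IsZero Z → Z ∈ X
  iso_closed : ∀ {A B : C}, (A ≅ B) → A ∈ X → B ∈ X
  sum_closed : ∀ {A B : C}, A ∈ X → B ∈ X → (A ⊞ B) ∈ X
  summand_closed : ∀ {A B : C}, (A ⊞ B) ∈ X → A ∈ X

/-- Two morphisms are identified in the quotient category `C/X` precisely when
their difference factors through an object of `X`. -/
def xRel [Preadditive C] (X : Set C) : HomRel C :=
  fun _ _ f g => FactorsThru X (f - g)

/-- let `A --x--> B --y--> Z --δ--> A⟦1⟧` and
`A --(x,α)ᵀ--> B ⊞ X₀ --(m,γ)--> D --η--> A⟦1⟧` be distinguished triangles with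
`X₀ ∈ X`, `x` `X`-monic and `α` a left `X`-approximation of `A`, and let
`(𝟙 A, biprod.fst, v)` be a morphism of triangles from the second triangle to
the first. Then `v : D ⟶ Z` becomes an isomorphism in the quotient `C/X`. -/
theorem statement5 [Preadditive C] [HasZeroObject C] [HasShift C ℤ]
    [∀ n : ℤ, (shiftFunctor C n).Additive] [Pretriangulated C] [HasBinaryBiproducts C]
    (X : Set C) (hX : IsAdditiveClosedSubcat X)
    {A B Z X₀ D : C}
    (x : A ⟶ B) (y : B ⟶ Z) (δ : Z ⟶ (A⟦(1 : ℤ)⟧))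
    (α : A ⟶ X₀) (m : B ⟶ D) (γ : X₀ ⟶ D) (η : D ⟶ (A⟦(1 : ℤ)⟧))
    (hT1 : Triangle.mk x y δ ∈ distTriang C)
    (hT2 : Triangle.mk (biprod.lift x α) (biprod.desc m γ) η ∈ distTriang C)
    (hxm : IsXMonic X x) (hα : IsLeftApprox X α)
    (v : D ⟶ Z)
    (hsq1 : biprod.lift x α ≫ biprod.fst = 𝟙 A ≫ x)
    (hsq2 : biprod.desc m γ ≫ v = biprod.fst ≫ y)
    (hsq3 : η ≫ ((𝟙 A)⟦(1 : ℤ)⟧') = v ≫ δ) :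
    IsIso ((Quotient.functor (xRel X)).map v) := by
  -- `s : B ⟶ X₀` with `x ≫ s = α`, from `x` being `X`-monic.
  obtain ⟨s, hs⟩ := hxm hα.1 α
  -- complete `(𝟙 A, biprod.lift 𝟙 s)` to a morphism of triangles `T1 ⟶ T2`.
  obtain ⟨u, hu1, hu2⟩ : ∃ u : Z ⟶ D, y ≫ u = biprod.lift (𝟙 B) s ≫ biprod.desc m γ ∧
      δ ≫ ((𝟙 A)⟦(1 : ℤ)⟧') = u ≫ η :=
    complete_distinguished_triangle_morphism
      (Triangle.mk x y δ) (Triangle.mk (biprod.lift x α) (biprod.desc m γ) η)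
      hT1 hT2 (𝟙 A) (biprod.lift (𝟙 B) s) (by change x ≫ biprod.lift (𝟙 B) s = 𝟙 A ≫ biprod.lift x α; ext <;> simp [hs])
  rw [CategoryTheory.Functor.map_id, comp_id] at hu2
  have hvδ : v ≫ δ = η := by rw [← hsq3, CategoryTheory.Functor.map_id, comp_id]
  -- `w := u ≫ v - 𝟙` is square-zero in `C`, so `u ≫ v` is an iso in `C`.
  set w : Z ⟶ Z := u ≫ v - 𝟙 Z with hw
  have huv' : u ≫ v = 𝟙 Z + w := by rw [hw]; abel
  have hyw : y ≫ w = 0 := by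
    rw [hw, Preadditive.comp_sub, ← assoc, hu1, assoc, hsq2, comp_id, ← assoc]
    simp
  have hwδ : w ≫ δ = 0 := by
    rw [hw, Preadditive.sub_comp, assoc, hvδ, ← hu2, id_comp, sub_self]
  obtain ⟨t, ht⟩ : ∃ t : (A⟦(1 : ℤ)⟧) ⟶ Z, w = δ ≫ t :=
    Triangle.yoneda_exact₃ (Triangle.mk x y δ) hT1 w hyw
  have hww : w ≫ w = 0 := by rw [ht, ← assoc, ← ht, hwδ, zero_comp]
  have huv : IsIso (u ≫ v) := by
    refine ⟨𝟙 Z - w, ?_, ?_⟩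
    · rw [huv']
      simp only [Preadditive.add_comp, Preadditive.comp_sub, id_comp, comp_id, hww, sub_zero]
      abel
    · rw [huv']
      simp only [Preadditive.sub_comp, Preadditive.comp_add, id_comp, comp_id, hww, sub_zero]
      abel
  -- `w' := v ≫ u - 𝟙 D` has square factoring through `X₀`.
  set w' : D ⟶ D := v ≫ u - 𝟙 D with hw'
  have hvu' : v ≫ u = 𝟙 D + w' := by rw [hw']; abel
  have hw'η : w' ≫ η = 0 := by
    rw [hw', Preadditive.sub_comp, assoc, ← hu2, hvδ, id_comp, sub_self]
  obtain ⟨t', ht'⟩ : ∃ t' : D ⟶ B ⊞ X₀, w' = t' ≫ biprod.desc m γ :=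
    Triangle.coyoneda_exact₃ (Triangle.mk (biprod.lift x α) (biprod.desc m γ) η) hT2 w' hw'η
  have hcw' : biprod.desc m γ ≫ w' = (biprod.fst ≫ s - biprod.snd) ≫ γ := by
    rw [hw', Preadditive.comp_sub, ← assoc, hsq2, comp_id]
    ext
    · simp [hu1, hs]
    · simp [hu1]
  have hw'w' : FactorsThru X (w' ≫ w') := by
    refine ⟨X₀, t' ≫ (biprod.fst ≫ s - biprod.snd), γ, hα.1, ?_⟩
    rw [assoc, ← hcw', ← assoc, ← ht']
  have hfac : FactorsThru X (-(w' ≫ w')) := by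
    obtain ⟨M, g, h, hM, hgh⟩ := hw'w'
    exact ⟨M, -g, h, hM, by rw [Preadditive.neg_comp, hgh]⟩
  -- pass to the quotient category
  have hπuv : IsIso ((Quotient.functor (xRel X)).map u ≫ (Quotient.functor (xRel X)).map v) := by
    rw [← Functor.map_comp]
    exact inferInstance
  have hπvu : IsIso ((Quotient.functor (xRel X)).map v ≫ (Quotient.functor (xRel X)).map u) := by
    rw [← Functor.map_comp]
    refine ⟨(Quotient.functor (xRel X)).map (𝟙 D - w'), ?_, ?_⟩
    · rw [← Functor.map_comp, ← CategoryTheory.Functor.map_id (Quotient.functor (xRel X))]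
      refine CategoryTheory.Quotient.sound (xRel X) ?_
      show FactorsThru X _
      have heq : (v ≫ u) ≫ (𝟙 D - w') - 𝟙 D = -(w' ≫ w') := by
        rw [hvu']
        simp only [Preadditive.add_comp, Preadditive.comp_sub, id_comp, comp_id]
        abel
      rw [heq]
      exact hfac
    · rw [← Functor.map_comp, ← CategoryTheory.Functor.map_id (Quotient.functor (xRel X))]
      refine CategoryTheory.Quotient.sound (xRel X) ?_
      show FactorsThru X _
      have heq : (𝟙 D - w') ≫ (v ≫ u) - 𝟙 D = -(w' ≫ w') := by
        rw [hvu']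
        simp only [Preadditive.sub_comp, Preadditive.comp_add, id_comp, comp_id]
        abel
      rw [heq]
      exact hfac
  -- a morphism with a left inverse and a right inverse is an isomorphism
  have hl : (inv ((Quotient.functor (xRel X)).map u ≫ (Quotient.functor (xRel X)).map v) ≫
      (Quotient.functor (xRel X)).map u) ≫ (Quotient.functor (xRel X)).map v = 𝟙 _ := by
    rw [assoc, IsIso.inv_comp_eq, comp_id]
  have hr : (Quotient.functor (xRel X)).map v ≫ ((Quotient.functor (xRel X)).map u ≫
      inv ((Quotient.functor (xRel X)).map v ≫ (Quotient.functor (xRel X)).map u)) = 𝟙 _ := by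
    rw [← assoc, IsIso.hom_inv_id]
  have hlr : inv ((Quotient.functor (xRel X)).map u ≫ (Quotient.functor (xRel X)).map v) ≫
      (Quotient.functor (xRel X)).map u = (Quotient.functor (xRel X)).map u ≫
      inv ((Quotient.functor (xRel X)).map v ≫ (Quotient.functor (xRel X)).map u) := by
    conv_lhs => rw [← comp_id (inv ((Quotient.functor (xRel X)).map u ≫
      (Quotient.functor (xRel X)).map v) ≫ (Quotient.functor (xRel X)).map u), ← hr]
    rw [← assoc, ← assoc, hl, id_comp]
  exact ⟨⟨inv ((Quotient.functor (xRel X)).map u ≫ (Quotient.functor (xRel X)).map v) ≫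
    (Quotient.functor (xRel X)).map u, by rw [hlr]; exact hr, hl⟩⟩

end PaperStmt
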